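/- Given a semaphore code S over A and a fixed s' ∈ S ending in letter a, the set S' = {w ∈ A* : ∃ s ∈ S, sa = ws'} is a maximal suffix code (i.e., a suffix code not properly contained in any other suffix code). -/
import Mathlib


/-- A suffix code: an antichain with respect to the suffix order. -/
def SuffixCode {A : Type*} (S : Set (List A)) : Prop :=
  ∀ u ∈ S, ∀ v ∈ S, u <:+ v → u = v

private lemma suffix_append_same {A : Type*} {u v t : List A} (h : u <:+ v) :
    u ++ t <:+ v ++ t := by
  obtain ⟨p, rfl⟩ := h
  exact ⟨p, by simp⟩

private lemma suffix_of_append_same {A : Type*} {u v t : List A} (h : u ++ t <:+ v ++ t) :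
    u <:+ v := by
  obtain ⟨p, hp⟩ := h
  exact ⟨p, List.append_cancel_right (by simpa using hp)⟩

/-- Iterated semaphore property. -/
private lemma iterated_semaphore {A : Type*} (S : Set (List A))
    (hsem : ∀ s ∈ S, ∀ a : A, ∃ t ∈ S, t <:+ s ++ [a]) :
    ∀ v : List A, ∀ s ∈ S, ∃ t ∈ S, t <:+ s ++ v := by
  intro v
  induction v using List.reverseRecOn with
  | nil => intro s hs; exact ⟨s, hs, by simp⟩
  | append_singleton v b ih =>
      intro s hs
      obtain ⟨t, ht, htv⟩ := ih s hs
      obtain ⟨t', ht', htt'⟩ := hsem t ht b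
      exact ⟨t', ht', htt'.trans (by
        rw [← List.append_assoc]; exact suffix_append_same htv)⟩

/-- given a semaphore code `S` over `A` and a fixed `s' ∈ S` ending
in the letter `a`, the set `S' = {w ∈ A* : ∃ s ∈ S, s a = w s'}` is a maximal
suffix code. -/
theorem semaphore_station_maximal_suffix_code {A : Type*} [Fintype A]
    (S : Set (List A)) (hS : [] ∉ S) (hcode : SuffixCode S)
    (hsem : ∀ s ∈ S, ∀ a : A, ∃ t ∈ S, t <:+ s ++ [a])
    (s' : List A) (hs' : s' ∈ S) (a : A) (stil : List A) (hlast : s' = stil ++ [a]) :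
    SuffixCode {w : List A | ∃ s ∈ S, s ++ [a] = w ++ s'} ∧
      ∀ Y : Set (List A), SuffixCode Y →
        {w : List A | ∃ s ∈ S, s ++ [a] = w ++ s'} ⊆ Y →
        Y = {w : List A | ∃ s ∈ S, s ++ [a] = w ++ s'} := by
  set S' : Set (List A) := {w : List A | ∃ s ∈ S, s ++ [a] = w ++ s'} with hS'def
  -- S' is a suffix code
  have hsc : SuffixCode S' := by
    intro u hu v hv huv
    obtain ⟨s, hsS, hs⟩ := hu
    obtain ⟨t, htS, ht⟩ := hv
    have h1 : s ++ [a] <:+ t ++ [a] := by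
      rw [hs, ht]; exact suffix_append_same huv
    have h2 : s <:+ t := suffix_of_append_same h1
    have hst : s = t := hcode s hsS t htS h2
    have : u ++ s' = v ++ s' := by rw [← hs, ← ht, hst]
    exact List.append_cancel_right this
  refine ⟨hsc, ?_⟩
  -- key claim: every word is comparable with some element of S'
  have key : ∀ y : List A, ∃ w ∈ S', w <:+ y ∨ y <:+ w := by
    intro y
    -- find t ∈ S comparable with y ++ stil
    obtain ⟨t, htS, htsuf⟩ := iterated_semaphore S hsem (y ++ stil) s' hs'
    have hysuf : y ++ stil <:+ s' ++ (y ++ stil) := ⟨s', rfl⟩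
    rcases List.suffix_or_suffix_of_suffix htsuf hysuf with hcase | hcase
    · -- t <:+ y ++ stil : use semaphore once more
      obtain ⟨t', ht'S, ht't⟩ := hsem t htS a
      have h1 : t ++ [a] <:+ (y ++ stil) ++ [a] := suffix_append_same hcase
      have h2 : (y ++ stil) ++ [a] = y ++ s' := by rw [hlast, List.append_assoc]
      have ht'ys : t' <:+ y ++ s' := ht't.trans (h2 ▸ h1)
      have hs'ys : s' <:+ y ++ s' := ⟨y, rfl⟩
      have ht's' : t' = s' := by
        rcases List.suffix_or_suffix_of_suffix ht'ys hs'ys with h | h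
        · exact hcode t' ht'S s' hs' h
        · exact (hcode s' hs' t' ht'S h).symm
      -- s' <:+ t ++ [a]
      obtain ⟨w, hw⟩ := ht's' ▸ ht't
      refine ⟨w, ⟨t, htS, hw.symm⟩, Or.inl ?_⟩
      have : w ++ s' <:+ y ++ s' := hw ▸ (h2 ▸ h1)
      exact suffix_of_append_same this
    · -- y ++ stil <:+ t
      have h1 : (y ++ stil) ++ [a] <:+ t ++ [a] := suffix_append_same hcase
      have h2 : (y ++ stil) ++ [a] = y ++ s' := by rw [hlast, List.append_assoc]
      have hys : y ++ s' <:+ t ++ [a] := h2 ▸ h1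
      have hs't : s' <:+ t ++ [a] := (List.suffix_append y s').trans hys
      obtain ⟨w, hw⟩ := hs't
      refine ⟨w, ⟨t, htS, hw.symm⟩, Or.inr ?_⟩
      have : y ++ s' <:+ w ++ s' := hw ▸ hys
      exact suffix_of_append_same this
  intro Y hY hYsub
  apply Set.eq_of_subset_of_subset _ hYsub
  intro y hy
  obtain ⟨w, hwS', hcomp⟩ := key y
  have hwY : w ∈ Y := hYsub hwS'
  rcases hcomp with h | h
  · rw [← hY w hwY y hy h]; exact hwS'
  · rw [hY y hy w hwY h]; exact hwS'
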